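/- arXiv:2110.00164 — 2 statements merged into one kernel-verified Lean document; each statement's English description precedes it below -/
import Mathlib

section
/- Let S be a finite subset of ℤ, let i ∈ ℤ, and let w be a word of integers containing no letter equal to i+1. If i+1 ∈ S ⋆ (i w), then i ∈ S ⋆ (i w), where i w denotes the word whose first letter is i followed by w. -/
/-- `S ⋆ m`: replace the largest element of `S` that is `≤ m` by `m`,
or insert `m` if no such element exists. -/
def starOne (S : Finset ℤ) (m : ℤ) : Finset ℤ :=
  if h : (S.filter (fun x => x ≤ m)).Nonempty then
    insert m (S.erase ((S.filter (fun x => x ≤ m)).max' h))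
  else insert m S

/-- `S ⋆ w` for a word `w` of integers. -/
def starWord (S : Finset ℤ) (w : List ℤ) : Finset ℤ := w.foldl starOne S

lemma self_mem_starOne (S : Finset ℤ) (m : ℤ) : m ∈ starOne S m := by
  unfold starOne; split <;> simp

lemma starOne_pres (i : ℤ) (T : Finset ℤ) (m : ℤ) (hm : m ≠ i + 1)
    (hP : i + 1 ∈ T → i ∈ T) (h : i + 1 ∈ starOne T m) : i ∈ starOne T m := by
  unfold starOne at h ⊢
  by_cases hne : (T.filter (fun x => x ≤ m)).Nonempty
  · rw [dif_pos hne] at h ⊢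
    simp only [Finset.mem_insert, Finset.mem_erase] at h ⊢
    rcases h with h | ⟨hx, hT⟩
    · exact absurd h.symm hm
    set x := (T.filter (fun x => x ≤ m)).max' hne with hxdef
    have hiT := hP hT
    by_cases hxi : x = i
    · have hxm : x ≤ m :=
        (Finset.mem_filter.mp ((T.filter (fun x => x ≤ m)).max'_mem hne)).2
      rcases eq_or_lt_of_le (hxi ▸ hxm) with h1 | h1
      · exact Or.inl h1
      · exfalso
        have hmem : i + 1 ∈ T.filter (fun x => x ≤ m) :=
          Finset.mem_filter.mpr ⟨hT, by omega⟩
        have := Finset.le_max' _ _ hmem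
        omega
    · exact Or.inr ⟨fun he => hxi he.symm, hiT⟩
  · rw [dif_neg hne] at h ⊢
    simp only [Finset.mem_insert] at h ⊢
    rcases h with h | h
    · exact absurd h.symm hm
    · exact Or.inr (hP h)

lemma starWord_pres (i : ℤ) (w : List ℤ) (hw : (i + 1) ∉ w) :
    ∀ T : Finset ℤ, (i + 1 ∈ T → i ∈ T) →
      (i + 1 ∈ starWord T w → i ∈ starWord T w) := by
  induction w with
  | nil => intro T hP; exact hP
  | cons a w ih =>
    intro T hP
    simp only [List.mem_cons, not_or] at hw
    exact ih hw.2 (starOne T a) (starOne_pres i T a (fun h => hw.1 h.symm) hP)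

/-- **Lemma.** Let `S` be a finite subset of `ℤ`, let `i ∈ ℤ`, and let `w` be
a word of integers containing no letter equal to `i+1`.  If
`i+1 ∈ S ⋆ (i·w)`, then `i ∈ S ⋆ (i·w)`. -/
theorem mem_of_succ_mem_starWord (S : Finset ℤ) (i : ℤ) (w : List ℤ)
    (hw : (i + 1) ∉ w) (h : i + 1 ∈ starWord S (i :: w)) :
    i ∈ starWord S (i :: w) := by
  have : starWord S (i :: w) = starWord (starOne S i) w := rfl
  rw [this] at h ⊢
  exact starWord_pres i w hw (starOne S i) (fun _ => self_mem_starOne S i) h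
end

section
/- Let S_1 be a finite subset of ℤ such that ∂_i S_1 is defined, and set S_2 = ∂_i S_1. Then: (1) for any integer x with x ≠ i and x ≠ i+1, the set S_2 ⋆ x equals S_1 ⋆ x or equals ∂_i(S_1 ⋆ x); (2) S_2 ⋆ (i+1) = S_1 ⋆ (i+1). -/
/-- `∂_i S`: if `i ∈ S` and `i+1 ∉ S`, replace `i` by `i+1`; if both or
neither of `i, i+1` lie in `S`, do nothing.  (The remaining case,
`i ∉ S` and `i+1 ∈ S`, is the undefined one.) -/
def dSet (i : ℤ) (S : Finset ℤ) : Finset ℤ :=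
  if i ∈ S ∧ i + 1 ∉ S then insert (i + 1) (S.erase i) else S

lemma filter_max'_eq {S : Finset ℤ} {m a : ℤ} (h : (S.filter (fun x => x ≤ m)).Nonempty)
    (ha : a ∈ S) (ham : a ≤ m) (hmax : ∀ b ∈ S, b ≤ m → b ≤ a) :
    (S.filter (fun x => x ≤ m)).max' h = a := by
  apply le_antisymm
  · apply Finset.max'_le
    intro b hb
    simp only [Finset.mem_filter] at hb
    exact hmax b hb.1 hb.2
  · exact Finset.le_max' _ a (by simp [ha, ham])

/-- **Lemma.** Let `S₁` be a finite subset of `ℤ` such that `∂_i S₁` is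
defined (i.e. not: `i ∉ S₁` and `i+1 ∈ S₁`), and set `S₂ = ∂_i S₁`.  Then
(1) for any integer `x ∉ {i, i+1}`, the set `S₂ ⋆ x` equals `S₁ ⋆ x` or
`∂_i (S₁ ⋆ x)`; and (2) `S₂ ⋆ (i+1) = S₁ ⋆ (i+1)`. -/
theorem star_of_dSet (i : ℤ) (S₁ : Finset ℤ) (hdef : ¬ (i ∉ S₁ ∧ i + 1 ∈ S₁)) :
    (∀ x : ℤ, x ≠ i → x ≠ i + 1 →
      starOne (dSet i S₁) x = starOne S₁ x ∨
      starOne (dSet i S₁) x = dSet i (starOne S₁ x)) ∧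
    starOne (dSet i S₁) (i + 1) = starOne S₁ (i + 1) := by
  by_cases hc : i ∈ S₁ ∧ i + 1 ∉ S₁
  swap
  · have hd : dSet i S₁ = S₁ := by simp only [dSet, if_neg hc]
    rw [hd]
    exact ⟨fun x _ _ => Or.inl rfl, rfl⟩
  obtain ⟨hi, hi1⟩ := hc
  have hS₂ : dSet i S₁ = insert (i + 1) (S₁.erase i) := by
    simp only [dSet, if_pos (And.intro hi hi1)]
  rw [hS₂]
  set S₂ : Finset ℤ := insert (i + 1) (S₁.erase i) with hS₂def
  have hmemS₂ : ∀ b : ℤ, b ∈ S₂ ↔ (b = i + 1 ∨ (b ≠ i ∧ b ∈ S₁)) := by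
    intro b; simp [hS₂def, Finset.mem_insert, Finset.mem_erase]
  constructor
  · intro x hxi hxi1
    rcases lt_or_gt_of_ne hxi with hxlt | hxgt
    · -- x < i
      right
      by_cases hne : (S₁.filter (fun y => y ≤ x)).Nonempty
      · obtain ⟨c, hc⟩ := hne
        simp only [Finset.mem_filter] at hc
        have hne : (S₁.filter (fun y => y ≤ x)).Nonempty := ⟨c, by simp [hc.1, hc.2]⟩
        have hne₂ : (S₂.filter (fun y => y ≤ x)).Nonempty :=
          ⟨c, by simp [Finset.mem_filter, (hmemS₂ c).2 (Or.inr ⟨by omega, hc.1⟩), hc.2]⟩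
        set m := (S₁.filter (fun y => y ≤ x)).max' hne with hm
        have hmmem : m ∈ S₁ ∧ m ≤ x := by
          have h := (S₁.filter (fun y => y ≤ x)).max'_mem hne
          rw [Finset.mem_filter] at h
          exact h
        have hmax₂ : (S₂.filter (fun y => y ≤ x)).max' hne₂ = m := by
          apply filter_max'_eq hne₂ ((hmemS₂ m).2 (Or.inr ⟨by omega, hmmem.1⟩)) hmmem.2
          intro b hb hbx
          rcases (hmemS₂ b).1 hb with rfl | ⟨_, hb⟩
          · omega
          · exact Finset.le_max' _ b (by simp [hb, hbx])
        have e2 : starOne S₂ x = insert x (S₂.erase m) := by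
          rw [starOne, dif_pos hne₂, hmax₂]
        have e1 : starOne S₁ x = insert x (S₁.erase m) := by
          rw [starOne, dif_pos hne, ← hm]
        rw [e1, e2]
        have hiIn : i ∈ insert x (S₁.erase m) := by
          simp only [Finset.mem_insert, Finset.mem_erase]
          exact Or.inr ⟨by omega, hi⟩
        have hi1In : i + 1 ∉ insert x (S₁.erase m) := by
          simp only [Finset.mem_insert, Finset.mem_erase]
          push_neg
          exact ⟨by omega, fun _ => hi1⟩
        rw [dSet, if_pos ⟨hiIn, hi1In⟩]
        ext b
        simp only [Finset.mem_insert, Finset.mem_erase, hmemS₂]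
        have hb1 : b ∈ S₁ → b ≠ i + 1 := fun h1 h2 => hi1 (h2 ▸ h1)
        by_cases hb : b ∈ S₁ <;>
          [(have hbn := hb1 hb; simp [hb]); simp [hb]] <;> omega
      · have hne₂ : ¬ (S₂.filter (fun y => y ≤ x)).Nonempty := by
          intro ⟨c, hc⟩
          simp only [Finset.mem_filter, hmemS₂] at hc
          rcases hc.1 with rfl | ⟨_, hcS⟩
          · omega
          · exact hne ⟨c, by simp [hcS, hc.2]⟩
        have e2 : starOne S₂ x = insert x S₂ := by rw [starOne, dif_neg hne₂]
        have e1 : starOne S₁ x = insert x S₁ := by rw [starOne, dif_neg hne]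
        rw [e1, e2]
        have hiIn : i ∈ insert x S₁ := by simp [hi]
        have hi1In : i + 1 ∉ insert x S₁ := by
          simp only [Finset.mem_insert]
          push_neg
          exact ⟨by omega, hi1⟩
        rw [dSet, if_pos ⟨hiIn, hi1In⟩]
        ext b
        simp only [Finset.mem_insert, Finset.mem_erase, hmemS₂]
        have hb1 : b ∈ S₁ → b ≠ i + 1 := fun h1 h2 => hi1 (h2 ▸ h1)
        by_cases hb : b ∈ S₁ <;>
          [(have hbn := hb1 hb; simp [hb]); simp [hb]] <;> omega
    · -- x > i + 1
      have hne : (S₁.filter (fun y => y ≤ x)).Nonempty := ⟨i, by simp [hi]; omega⟩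
      set m := (S₁.filter (fun y => y ≤ x)).max' hne with hm
      have hmmem : m ∈ S₁ ∧ m ≤ x := by
        have h := (S₁.filter (fun y => y ≤ x)).max'_mem hne
        rw [Finset.mem_filter] at h
        exact h
      have him : i ≤ m := Finset.le_max' _ i (by simp [hi]; omega)
      have hmne : m ≠ i + 1 := fun h => hi1 (h ▸ hmmem.1)
      have hne₂ : (S₂.filter (fun y => y ≤ x)).Nonempty :=
        ⟨i + 1, by simp [Finset.mem_filter, (hmemS₂ (i+1)).2 (Or.inl rfl)]; omega⟩
      rcases eq_or_lt_of_le him with heq | hlt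
      · -- m = i : same result
        left
        have hmax₂ : (S₂.filter (fun y => y ≤ x)).max' hne₂ = i + 1 := by
          apply filter_max'_eq hne₂ ((hmemS₂ (i+1)).2 (Or.inl rfl)) (by omega)
          intro b hb hbx
          rcases (hmemS₂ b).1 hb with rfl | ⟨_, hb⟩
          · omega
          · have : b ≤ m := Finset.le_max' _ b (by simp [hb, hbx])
            omega
        have e2 : starOne S₂ x = insert x (S₂.erase (i + 1)) := by
          rw [starOne, dif_pos hne₂, hmax₂]
        have e1 : starOne S₁ x = insert x (S₁.erase i) := by
          rw [starOne, dif_pos hne, ← hm, ← heq]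
        rw [e1, e2]
        ext b
        simp only [Finset.mem_insert, Finset.mem_erase, hmemS₂]
        have hb1 : b ∈ S₁ → b ≠ i + 1 := fun h1 h2 => hi1 (h2 ▸ h1)
        by_cases hb : b ∈ S₁ <;>
          [(have hbn := hb1 hb; simp [hb]); simp [hb]] <;> omega
      · -- m ≥ i + 2
        right
        have hm2 : i + 2 ≤ m := by omega
        have hmax₂ : (S₂.filter (fun y => y ≤ x)).max' hne₂ = m := by
          apply filter_max'_eq hne₂ ((hmemS₂ m).2 (Or.inr ⟨by omega, hmmem.1⟩)) hmmem.2
          intro b hb hbx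
          rcases (hmemS₂ b).1 hb with rfl | ⟨_, hb⟩
          · omega
          · exact Finset.le_max' _ b (by simp [hb, hbx])
        have e2 : starOne S₂ x = insert x (S₂.erase m) := by
          rw [starOne, dif_pos hne₂, hmax₂]
        have e1 : starOne S₁ x = insert x (S₁.erase m) := by
          rw [starOne, dif_pos hne, ← hm]
        rw [e1, e2]
        have hiIn : i ∈ insert x (S₁.erase m) := by
          simp only [Finset.mem_insert, Finset.mem_erase]
          exact Or.inr ⟨by omega, hi⟩
        have hi1In : i + 1 ∉ insert x (S₁.erase m) := by
          simp only [Finset.mem_insert, Finset.mem_erase]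
          push_neg
          exact ⟨by omega, fun _ => hi1⟩
        rw [dSet, if_pos ⟨hiIn, hi1In⟩]
        ext b
        simp only [Finset.mem_insert, Finset.mem_erase, hmemS₂]
        have hb1 : b ∈ S₁ → b ≠ i + 1 := fun h1 h2 => hi1 (h2 ▸ h1)
        by_cases hb : b ∈ S₁ <;>
          [(have hbn := hb1 hb; simp [hb]); simp [hb]] <;> omega
  · -- x = i + 1
    have hne : (S₁.filter (fun y => y ≤ i + 1)).Nonempty :=
      ⟨i, by simp only [Finset.mem_filter]; exact ⟨hi, by omega⟩⟩
    have hne₂ : (S₂.filter (fun y => y ≤ i + 1)).Nonempty :=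
      ⟨i + 1, by simp [Finset.mem_filter, (hmemS₂ (i+1)).2 (Or.inl rfl)]⟩
    have hmax₁ : (S₁.filter (fun y => y ≤ i + 1)).max' hne = i := by
      apply filter_max'_eq hne hi (by omega)
      intro b hb hbx
      have : b ≠ i + 1 := fun h => hi1 (h ▸ hb)
      omega
    have hmax₂ : (S₂.filter (fun y => y ≤ i + 1)).max' hne₂ = i + 1 := by
      apply filter_max'_eq hne₂ ((hmemS₂ (i+1)).2 (Or.inl rfl)) le_rfl
      intro b hb hbx
      exact hbx
    have e1 : starOne S₁ (i + 1) = insert (i + 1) (S₁.erase i) := by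
      rw [starOne, dif_pos hne, hmax₁]
    have e2 : starOne S₂ (i + 1) = insert (i + 1) (S₂.erase (i + 1)) := by
      rw [starOne, dif_pos hne₂, hmax₂]
    rw [e1, e2]
    ext b
    simp only [Finset.mem_insert, Finset.mem_erase, hmemS₂]
    have hb1 : b ∈ S₁ → b ≠ i + 1 := fun h1 h2 => hi1 (h2 ▸ h1)
    by_cases hb : b ∈ S₁ <;>
      [(have hbn := hb1 hb; simp [hb]); simp [hb]] <;> omega
end
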